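/- Lemma C.1: Let f ∈ F_G and suppose a solution φ ∈ F_G satisfies (E) and (f-FDS). Then for every communication game (v,g) and every component C ∈ N/g, Σ_{i∈C} φ_i(v,g) = Σ_{i∈C} f_i(v,g) + (|C|/n)·(v(N) − Σ_{k∈N} f_k(v,g)). -/

import Mathlib

/-!
Lemma C.1: component surplus formula under (E) and (f-FDS) for communication games.
-/

namespace Stmt2

/-- A TU-game on the player set `N`: a function on coalitions vanishing at `∅`. -/
abbrev Game (N : Type*) := {v : Finset N → ℝ // v ∅ = 0}

/-- A solution for communication games. -/
abbrev GSolution (N : Type*) := Game N → SimpleGraph N → N → ℝ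

variable {N : Type*} [Fintype N] [DecidableEq N]

/-- The component of `N/g` containing the player `i`. -/
noncomputable def comp (g : SimpleGraph N) (i : N) : Finset N :=
  (Set.toFinite {j | g.Reachable i j}).toFinset

/-- Efficiency (E). -/
def Efficient (φ : GSolution N) : Prop :=
  ∀ (v : Game N) (g : SimpleGraph N), ∑ i, φ v g i = v.1 Finset.univ

/-- `f`-fair distribution of the surplus (`f`-FDS): the average surplus relative
to `f` is the same over every two components of the network. -/
def FDS (f φ : GSolution N) : Prop :=
  ∀ (v : Game N) (g : SimpleGraph N) (i j : N),
    (1 / ((comp g i).card : ℝ)) * ∑ k ∈ comp g i, (φ v g k - f v g k) =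
      (1 / ((comp g j).card : ℝ)) * ∑ k ∈ comp g j, (φ v g k - f v g k)

omit [DecidableEq N] in
lemma mem_comp {g : SimpleGraph N} {i j : N} : j ∈ comp g i ↔ g.Reachable i j := by
  simp [comp]

omit [DecidableEq N] in
lemma self_mem_comp (g : SimpleGraph N) (i : N) : i ∈ comp g i :=
  mem_comp.2 (SimpleGraph.Reachable.refl i)

omit [DecidableEq N] in
lemma comp_eq {g : SimpleGraph N} {i j : N} (h : g.Reachable i j) : comp g i = comp g j := by
  ext k
  simp only [mem_comp]
  exact ⟨fun hk => h.symm.trans hk, fun hk => h.trans hk⟩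

/-- Lemma C.1. -/
theorem component_surplus [Nonempty N] (f φ : GSolution N)
    (hE : Efficient φ) (hFDS : FDS f φ) :
    ∀ (v : Game N) (g : SimpleGraph N) (i : N),
      ∑ k ∈ comp g i, φ v g k =
        (∑ k ∈ comp g i, f v g k) +
          (((comp g i).card : ℝ) / (Fintype.card N : ℝ)) *
            (v.1 Finset.univ - ∑ k, f v g k) := by
  intro v g i
  set x : N → ℝ := fun k => φ v g k - f v g k with hx
  have hcard : ∀ j : N, ((comp g j).card : ℝ) ≠ 0 := by
    intro j
    exact_mod_cast (Finset.card_pos.2 ⟨j, self_mem_comp g j⟩).ne'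
  set c : ℝ := (1 / ((comp g i).card : ℝ)) * ∑ k ∈ comp g i, x k with hc
  have key : ∀ j : N, ∑ k ∈ comp g j, x k = ((comp g j).card : ℝ) * c := by
    intro j
    have h' : (1 / ((comp g j).card : ℝ)) * ∑ k ∈ comp g j, x k = c := hFDS v g j i
    have := hcard j
    field_simp at h'
    linarith [h']
  -- double counting
  have h2 : ∑ k : N, (1 / ((comp g k).card : ℝ)) * ∑ j ∈ comp g k, x j = ∑ j : N, x j := by
    have step : ∀ k : N, (1 / ((comp g k).card : ℝ)) * ∑ j ∈ comp g k, x j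
        = ∑ j : N, (if j ∈ comp g k then x j / ((comp g k).card : ℝ) else 0) := by
      intro k
      rw [Finset.sum_ite_mem, Finset.univ_inter, Finset.mul_sum]
      refine Finset.sum_congr rfl fun j _ => ?_
      ring
    rw [Finset.sum_congr rfl fun k _ => step k, Finset.sum_comm]
    refine Finset.sum_congr rfl fun j _ => ?_
    have step2 : ∀ k : N, (if j ∈ comp g k then x j / ((comp g k).card : ℝ) else 0)
        = (if k ∈ comp g j then x j / ((comp g j).card : ℝ) else 0) := by
      intro k
      by_cases h : j ∈ comp g k
      · have hr : g.Reachable k j := mem_comp.1 h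
        rw [if_pos (mem_comp.2 hr.symm), if_pos h, comp_eq hr]
      · rw [if_neg h, if_neg (fun hk => h (mem_comp.2 (mem_comp.1 hk).symm))]
    rw [Finset.sum_congr rfl fun k _ => step2 k, Finset.sum_ite_mem, Finset.univ_inter,
      Finset.sum_const, nsmul_eq_mul, mul_div_cancel₀ _ (hcard j)]
  have h1 : ∑ k : N, (1 / ((comp g k).card : ℝ)) * ∑ j ∈ comp g k, x j
      = (Fintype.card N : ℝ) * c := by
    rw [Finset.sum_congr rfl fun k _ => hFDS v g k i, Finset.sum_const, nsmul_eq_mul,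
      Finset.card_univ]
  have htot : ∑ j : N, x j = v.1 Finset.univ - ∑ k, f v g k := by
    simp only [hx, Finset.sum_sub_distrib]
    rw [hE v g]
  have hn : (Fintype.card N : ℝ) ≠ 0 := by
    exact_mod_cast (Fintype.card_pos).ne'
  have hnc : (Fintype.card N : ℝ) * c = v.1 Finset.univ - ∑ k, f v g k := by
    rw [← h1, h2, htot]
  have hcomp : ∑ k ∈ comp g i, x k = ((comp g i).card : ℝ) * c := key i
  have hsub : ∑ k ∈ comp g i, x k
      = ∑ k ∈ comp g i, φ v g k - ∑ k ∈ comp g i, f v g k := Finset.sum_sub_distrib (φ v g) (f v g)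
  have hceq : c = (v.1 Finset.univ - ∑ k, f v g k) / (Fintype.card N : ℝ) := by
    field_simp
    linarith [hnc]
  rw [hceq, hsub] at hcomp
  have : ↑(comp g i).card / (Fintype.card N : ℝ) * (v.1 Finset.univ - ∑ k, f v g k)
      = ((comp g i).card : ℝ) * ((v.1 Finset.univ - ∑ k, f v g k) / (Fintype.card N : ℝ)) := by
    ring
  rw [this]
  linarith [hcomp]

end Stmt2
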